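/- The tensor of coend lenses, defined on representatives by [A,v,u] ⊗ [A',v',u'] = [A⊗A', (id_A ⊗ s_{Y,A'} ⊗ id_{Y'}) ∘ (v ⊗ v'), (u ⊗ u') ∘ (id_A ⊗ s_{A',R} ⊗ id_{R'})], is well-defined on equivalence classes of coend lenses. -/

import Mathlib

open CategoryTheory MonoidalCategory

variable {C : Type u} [Category.{v} C] [MonoidalCategory C]

/-- A representative of a coend lens `(X,S) → (Y,R)`: a bound object `A`
together with `v : X ⟶ A ⊗ Y` and `u : A ⊗ R ⟶ S`. -/
structure LensRep (X S Y R : C) where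
  A : C
  v : X ⟶ A ⊗ Y
  u : A ⊗ R ⟶ S

/-- The sliding relation generating the coend equivalence:
`((f ⊗ 𝟙) ∘ v, u) ∼ (v, u ∘ (f ⊗ 𝟙))`. -/
inductive LensRel {X S Y R : C} : LensRep X S Y R → LensRep X S Y R → Prop
  | slide {A B : C} (f : A ⟶ B) (v : X ⟶ A ⊗ Y) (u : B ⊗ R ⟶ S) :
      LensRel ⟨B, v ≫ (f ▷ Y), u⟩ ⟨A, v, (f ▷ R) ≫ u⟩

/-- A coend lens is an equivalence class of representatives. -/
def CoendLens (X S Y R : C) : Type _ := Quot (LensRel (X := X) (S := S) (Y := Y) (R := R))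

variable [SymmetricCategory C]

/-- Tensor of representatives:
`[A,v,u] ⊗ [A',v',u'] =
 [A⊗A', (id ⊗ s ⊗ id) ∘ (v ⊗ v'), (u ⊗ u') ∘ (id ⊗ s ⊗ id)]`,
where the middle interchanges are `tensorμ`, built from associators and the
symmetry `s`. -/
def LensRep.tensor {X S Y R X' S' Y' R' : C}
    (l : LensRep X S Y R) (l' : LensRep X' S' Y' R') :
    LensRep (X ⊗ X') (S ⊗ S') (Y ⊗ Y') (R ⊗ R') where
  A := l.A ⊗ l'.A
  v := (l.v ⊗ₘ l'.v) ≫ tensorμ l.A Y l'.A Y'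
  u := tensorμ l.A l'.A R R' ≫ (l.u ⊗ₘ l'.u)


section Aux
variable [SymmetricCategory C]

private theorem aux_v_right {X Y X' Y' A B AA : C} (f : A ⟶ B) (av : X ⟶ AA ⊗ Y)
    (v' : X' ⟶ A ⊗ Y') :
    (av ⊗ₘ v' ≫ f ▷ Y') ≫ tensorμ AA Y B Y' =
      ((av ⊗ₘ v') ≫ tensorμ AA Y A Y') ≫ (𝟙 AA ⊗ₘ f) ▷ (Y ⊗ Y') := by
  have h := tensorμ_natural (𝟙 AA) (𝟙 Y) f (𝟙 Y')
  simp only [MonoidalCategory.id_whiskerRight, id_tensorHom, tensorHom_id] at h ⊢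
  rw [tensorHom_def av (v' ≫ f ▷ Y'), MonoidalCategory.whiskerLeft_comp, Category.assoc,
    Category.assoc, h, tensorHom_def av v']
  simp only [Category.assoc]

private theorem aux_u_right {R R' S S' A B AA : C} (f : A ⟶ B) (au : AA ⊗ R ⟶ S)
    (u' : B ⊗ R' ⟶ S') :
    tensorμ AA A R R' ≫ (au ⊗ₘ f ▷ R' ≫ u') =
      ((𝟙 AA ⊗ₘ f) ▷ (R ⊗ R')) ≫ tensorμ AA B R R' ≫ (au ⊗ₘ u') := by
  have h := tensorμ_natural (𝟙 AA) f (𝟙 R) (𝟙 R')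
  simp only [id_tensorHom_id, MonoidalCategory.id_whiskerRight, tensorHom_id, id_tensorHom,
    Category.id_comp] at h ⊢
  rw [tensorHom_def au (f ▷ R' ≫ u'), MonoidalCategory.whiskerLeft_comp]
  slice_lhs 2 3 => rw [← whisker_exchange]
  simp only [Category.assoc]
  slice_lhs 1 2 => rw [← h]
  rw [tensorHom_def au u']
  simp only [Category.assoc]

private theorem aux_v_left {X Y X' Y' A B A' : C} (f : A ⟶ B) (v : X ⟶ A ⊗ Y)
    (bv : X' ⟶ A' ⊗ Y') :
    (v ≫ f ▷ Y ⊗ₘ bv) ≫ tensorμ B Y A' Y' =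
      ((v ⊗ₘ bv) ≫ tensorμ A Y A' Y') ≫ (f ⊗ₘ 𝟙 A') ▷ (Y ⊗ Y') := by
  have h := tensorμ_natural f (𝟙 Y) (𝟙 A') (𝟙 Y')
  simp only [id_tensorHom_id, MonoidalCategory.id_whiskerRight, tensorHom_id, id_tensorHom,
    Category.id_comp] at h ⊢
  rw [tensorHom_def (v ≫ f ▷ Y) bv, comp_whiskerRight]
  slice_lhs 2 3 => rw [← whisker_exchange]
  simp only [Category.assoc]
  slice_lhs 3 4 => rw [h]
  rw [tensorHom_def v bv]
  simp only [Category.assoc]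

private theorem aux_u_left {R R' S S' A B A' : C} (f : A ⟶ B) (u : B ⊗ R ⟶ S)
    (bu : A' ⊗ R' ⟶ S') :
    tensorμ A A' R R' ≫ (f ▷ R ≫ u ⊗ₘ bu) =
      ((f ⊗ₘ 𝟙 A') ▷ (R ⊗ R')) ≫ tensorμ B A' R R' ≫ (u ⊗ₘ bu) := by
  have h := tensorμ_natural f (𝟙 A') (𝟙 R) (𝟙 R')
  simp only [id_tensorHom_id, MonoidalCategory.id_whiskerRight, tensorHom_id, id_tensorHom,
    Category.id_comp] at h ⊢
  rw [tensorHom_def (f ▷ R ≫ u) bu, comp_whiskerRight]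
  slice_lhs 1 2 => rw [← h]
  rw [tensorHom_def u bu]
  simp only [Category.assoc]

end Aux

/-- The tensor of coend lenses is well defined on equivalence classes: there is
an operation on coend lenses which on representatives is given by
`LensRep.tensor`. -/
theorem coendLens_tensor_well_defined (X S Y R X' S' Y' R' : C) :
    ∃ tens : CoendLens X S Y R → CoendLens X' S' Y' R' →
        CoendLens (X ⊗ X') (S ⊗ S') (Y ⊗ Y') (R ⊗ R'),
      ∀ (l : LensRep X S Y R) (l' : LensRep X' S' Y' R'),
        tens (Quot.mk _ l) (Quot.mk _ l') = Quot.mk _ (l.tensor l') := by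
  refine ⟨Quot.lift₂ (fun l l' => Quot.mk _ (l.tensor l')) ?_ ?_, fun l l' => rfl⟩
  · rintro a _ _ ⟨f, v', u'⟩
    apply Quot.sound
    have h1 := aux_v_right (X := X) (Y := Y) f a.v v'
    have h2 := aux_u_right (S := S) f a.u u'
    have := LensRel.slide (X := X ⊗ X') (S := S ⊗ S') ((𝟙 a.A) ⊗ₘ f)
      ((a.v ⊗ₘ v') ≫ tensorμ a.A Y _ Y') (tensorμ a.A _ R R' ≫ (a.u ⊗ₘ u'))
    simpa [LensRep.tensor, h1, h2] using this
  · rintro _ _ b ⟨f, v, u⟩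
    apply Quot.sound
    have h1 := aux_v_left (X' := X') (Y' := Y') f v b.v
    have h2 := aux_u_left (S' := S') f u b.u
    have := LensRel.slide (X := X ⊗ X') (S := S ⊗ S') (f ⊗ₘ (𝟙 b.A))
      ((v ⊗ₘ b.v) ≫ tensorμ _ Y b.A Y') (tensorμ _ b.A R R' ≫ (u ⊗ₘ b.u))
    simpa [LensRep.tensor, h1, h2] using this
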